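/- Let U_1, …, U_k, U_{k+1} be Pauli operators on N qubits such that {U_1, …, U_k, U_{k+1}} is an independent set of stabilizers. Then for every choice of signs λ_1, …, λ_k ∈ {1, −1}, the trace of the matrix U_{k+1} · ∏_{i=1}^{k} (1 + λ_i U_i)/2 equals 0. -/

import Mathlib

noncomputable section

/-- The space of operators (matrices) on the `N`-qubit Hilbert space. -/
abbrev QMat (N : ℕ) := Matrix (Fin N → Fin 2) (Fin N → Fin 2) ℂ

def pauliSx : Matrix (Fin 2) (Fin 2) ℂ := !![0, 1; 1, 0]
def pauliSy : Matrix (Fin 2) (Fin 2) ℂ := !![0, -Complex.I; Complex.I, 0]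
def pauliSz : Matrix (Fin 2) (Fin 2) ℂ := !![1, 0; 0, -1]

/-- A Pauli operator on `N` qubits: a ±1-signed tensor product of single-qubit
Pauli matrices `1, σx, σy, σz`. -/
def IsPauli {N : ℕ} (M : QMat N) : Prop :=
  ∃ (ε : ℂ) (P : Fin N → Matrix (Fin 2) (Fin 2) ℂ),
    (ε = 1 ∨ ε = -1) ∧
    (∀ j, P j = 1 ∨ P j = pauliSx ∨ P j = pauliSy ∨ P j = pauliSz) ∧
    ∀ s t, M s t = ε * ∏ j, P j (s j) (t j)

/-- A set of stabilizers: pairwise commuting Pauli operators whose generated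
multiplicative group (equivalently, monoid, since each element is an involution)
does not contain `-1`. -/
def IsStabilizerSet {N : ℕ} (S : Set (QMat N)) : Prop :=
  (∀ M ∈ S, IsPauli M) ∧
  (∀ M ∈ S, ∀ M' ∈ S, M * M' = M' * M) ∧
  (-1 : QMat N) ∉ Submonoid.closure S

/-- An independent set of stabilizers: the product of every nonempty finite subset
(encoded as a nodup list of elements of `S`) is not a complex scalar multiple of
the identity matrix. -/
def IsIndependentSet {N : ℕ} (S : Set (QMat N)) : Prop :=
  IsStabilizerSet S ∧
  ∀ L : List (QMat N), L ≠ [] → L.Nodup → (∀ A ∈ L, A ∈ S) →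
    ∀ c : ℂ, L.prod ≠ c • (1 : QMat N)



def P1 (P : Matrix (Fin 2) (Fin 2) ℂ) : Prop :=
  P = 1 ∨ P = pauliSx ∨ P = pauliSy ∨ P = pauliSz

def GenPauli {N : ℕ} (M : QMat N) : Prop :=
  ∃ (c : ℂ) (P : Fin N → Matrix (Fin 2) (Fin 2) ℂ),
    (∀ j, P1 (P j)) ∧ ∀ s t, M s t = c * ∏ j, P j (s j) (t j)

lemma single_mul {P Q : Matrix (Fin 2) (Fin 2) ℂ} (hP : P1 P) (hQ : P1 Q) :
    ∃ (d : ℂ) (R : Matrix (Fin 2) (Fin 2) ℂ), P1 R ∧ P * Q = d • R := by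
  rcases hP with h|h|h|h <;> rcases hQ with h'|h'|h'|h' <;> subst h h'
  · exact ⟨1, 1, Or.inl rfl, by simp⟩
  · exact ⟨1, pauliSx, Or.inr (Or.inl rfl), by simp⟩
  · exact ⟨1, pauliSy, Or.inr (Or.inr (Or.inl rfl)), by simp⟩
  · exact ⟨1, pauliSz, Or.inr (Or.inr (Or.inr rfl)), by simp⟩
  · exact ⟨1, pauliSx, Or.inr (Or.inl rfl), by simp⟩
  · refine ⟨1, 1, Or.inl rfl, ?_⟩
    ext a b; fin_cases a <;> fin_cases b <;>
      norm_num [pauliSx, pauliSy, pauliSz, Matrix.mul_apply, Fin.sum_univ_two, Matrix.one_apply]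
  · refine ⟨Complex.I, pauliSz, Or.inr (Or.inr (Or.inr rfl)), ?_⟩
    ext a b; fin_cases a <;> fin_cases b <;>
      norm_num [pauliSx, pauliSy, pauliSz, Matrix.mul_apply, Fin.sum_univ_two, Matrix.one_apply]
  · refine ⟨-Complex.I, pauliSy, Or.inr (Or.inr (Or.inl rfl)), ?_⟩
    ext a b; fin_cases a <;> fin_cases b <;>
      norm_num [pauliSx, pauliSy, pauliSz, Matrix.mul_apply, Fin.sum_univ_two, Matrix.one_apply]
  · exact ⟨1, pauliSy, Or.inr (Or.inr (Or.inl rfl)), by simp⟩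
  · refine ⟨-Complex.I, pauliSz, Or.inr (Or.inr (Or.inr rfl)), ?_⟩
    ext a b; fin_cases a <;> fin_cases b <;>
      norm_num [pauliSx, pauliSy, pauliSz, Matrix.mul_apply, Fin.sum_univ_two, Matrix.one_apply]
  · refine ⟨1, 1, Or.inl rfl, ?_⟩
    ext a b; fin_cases a <;> fin_cases b <;>
      norm_num [pauliSx, pauliSy, pauliSz, Matrix.mul_apply, Fin.sum_univ_two, Matrix.one_apply]
  · refine ⟨Complex.I, pauliSx, Or.inr (Or.inl rfl), ?_⟩
    ext a b; fin_cases a <;> fin_cases b <;>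
      norm_num [pauliSx, pauliSy, pauliSz, Matrix.mul_apply, Fin.sum_univ_two, Matrix.one_apply]
  · exact ⟨1, pauliSz, Or.inr (Or.inr (Or.inr rfl)), by simp⟩
  · refine ⟨Complex.I, pauliSy, Or.inr (Or.inr (Or.inl rfl)), ?_⟩
    ext a b; fin_cases a <;> fin_cases b <;>
      norm_num [pauliSx, pauliSy, pauliSz, Matrix.mul_apply, Fin.sum_univ_two, Matrix.one_apply]
  · refine ⟨-Complex.I, pauliSx, Or.inr (Or.inl rfl), ?_⟩
    ext a b; fin_cases a <;> fin_cases b <;>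
      norm_num [pauliSx, pauliSy, pauliSz, Matrix.mul_apply, Fin.sum_univ_two, Matrix.one_apply]
  · refine ⟨1, 1, Or.inl rfl, ?_⟩
    ext a b; fin_cases a <;> fin_cases b <;>
      norm_num [pauliSx, pauliSy, pauliSz, Matrix.mul_apply, Fin.sum_univ_two, Matrix.one_apply]

lemma single_trace {P : Matrix (Fin 2) (Fin 2) ℂ} (hP : P1 P) (h1 : P ≠ 1) :
    ∑ x, P x x = 0 := by
  rcases hP with h|h|h|h <;> first
    | exact absurd h h1
    | (subst h; norm_num [pauliSx, pauliSy, pauliSz, Fin.sum_univ_two])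

lemma genPauli_one {N : ℕ} : GenPauli (1 : QMat N) := by
  refine ⟨1, fun _ => 1, fun _ => Or.inl rfl, fun s t => ?_⟩
  by_cases hst : s = t
  · subst hst; simp [Matrix.one_apply]
  · rw [Finset.prod_eq_zero (Finset.mem_univ (Function.ne_iff.mp hst).choose)]
    · simp [Matrix.one_apply, hst]
    · simp [Matrix.one_apply, (Function.ne_iff.mp hst).choose_spec]

lemma genPauli_mul {N : ℕ} {M M' : QMat N} (h : GenPauli M) (h' : GenPauli M') :
    GenPauli (M * M') := by
  obtain ⟨c, P, hP, hM⟩ := h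
  obtain ⟨c', Q, hQ, hM'⟩ := h'
  choose d R hR hdR using fun j => single_mul (hP j) (hQ j)
  refine ⟨c * c' * ∏ j, d j, R, hR, fun s t => ?_⟩
  have key : ∀ s t : Fin N → Fin 2,
      (∑ u : Fin N → Fin 2, ∏ j, (P j (s j) (u j) * Q j (u j) (t j)))
        = ∏ j, (P j * Q j) (s j) (t j) := by
    intro s t
    rw [← Fintype.prod_sum (fun (j : Fin N) (x : Fin 2) => P j (s j) x * Q j x (t j))]
    simp [Matrix.mul_apply]
  calc (M * M') s t = ∑ u, M s u * M' u t := rfl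
    _ = c * c' * ∑ u : Fin N → Fin 2, ∏ j, (P j (s j) (u j) * Q j (u j) (t j)) := by
        rw [Finset.mul_sum]
        refine Finset.sum_congr rfl fun u _ => ?_
        rw [hM, hM', Finset.prod_mul_distrib]; ring
    _ = c * c' * ∏ j, (P j * Q j) (s j) (t j) := by rw [key]
    _ = c * c' * ∏ j, (d j * R j (s j) (t j)) := by
        congr 1; exact Finset.prod_congr rfl fun j _ => by rw [hdR j]; rfl
    _ = (c * c' * ∏ j, d j) * ∏ j, R j (s j) (t j) := by
        rw [Finset.prod_mul_distrib]; ring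

lemma genPauli_trace {N : ℕ} {M : QMat N} (h : GenPauli M) :
    (∃ c : ℂ, M = c • 1) ∨ Matrix.trace M = 0 := by
  obtain ⟨c, P, hP, hM⟩ := h
  by_cases hone : ∀ j, P j = 1
  · left
    refine ⟨c, ?_⟩
    ext s t
    rw [hM s t]
    by_cases hst : s = t
    · subst hst
      simp [Matrix.one_apply, hone]
    · obtain ⟨j, hj⟩ := Function.ne_iff.mp hst
      rw [Finset.prod_eq_zero (Finset.mem_univ j)]
      · simp [Matrix.one_apply, hst]
      · rw [hone j]; simp [Matrix.one_apply, hj]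
  · right
    push_neg at hone
    obtain ⟨j0, hj0⟩ := hone
    unfold Matrix.trace Matrix.diag
    calc ∑ s, M s s = c * ∑ s : Fin N → Fin 2, ∏ j, P j (s j) (s j) := by
          rw [Finset.mul_sum]; exact Finset.sum_congr rfl fun s _ => hM s s
      _ = c * ∏ j, ∑ x, P j x x := by
          rw [← Fintype.prod_sum (fun (j : Fin N) (x : Fin 2) => P j x x)]
      _ = 0 := by
          rw [Finset.prod_eq_zero (Finset.mem_univ j0) (single_trace (hP j0) hj0)]
          ring

lemma isPauli_genPauli {N : ℕ} {M : QMat N} (h : IsPauli M) : GenPauli M := by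
  obtain ⟨ε, P, _, hP, hM⟩ := h
  exact ⟨ε, P, hP, hM⟩

lemma list_prod_genPauli {N : ℕ} {L : List (QMat N)} (h : ∀ A ∈ L, GenPauli A) :
    GenPauli L.prod := by
  induction L with
  | nil => exact genPauli_one
  | cons A L ih =>
    rw [List.prod_cons]
    exact genPauli_mul (h A List.mem_cons_self) (ih fun B hB => h B (List.mem_cons_of_mem A hB))

lemma trace_zero_of_indep {N : ℕ} {S : Set (QMat N)} (hind : IsIndependentSet S)
    (L : List (QMat N)) (hne : L ≠ []) (hnd : L.Nodup) (hmem : ∀ A ∈ L, A ∈ S) :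
    Matrix.trace L.prod = 0 := by
  have gp : GenPauli L.prod :=
    list_prod_genPauli fun A hA => isPauli_genPauli (hind.1.1 A (hmem A hA))
  rcases genPauli_trace gp with ⟨c, hc⟩ | h
  · exact absurd hc (hind.2 L hne hnd hmem c)
  · exact h

lemma main_induction (N k : ℕ) (U : Fin (k + 1) → QMat N)
    (hinj : Function.Injective U)
    (hind : IsIndependentSet (Set.range U))
    (lam : Fin k → ℂ) :
    ∀ (l m : List (Fin k)), (l ++ m).Nodup →
      Matrix.trace ((U (Fin.last k) * (m.map (fun i => U i.castSucc)).prod) *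
        (l.map (fun i => (2⁻¹ : ℂ) • (1 + lam i • U i.castSucc))).prod) = 0 := by
  intro l
  induction l with
  | nil =>
    intro m hm
    simp only [List.map_nil, List.prod_nil, mul_one, List.nil_append] at hm ⊢
    have := trace_zero_of_indep hind
      (U (Fin.last k) :: m.map (fun i => U i.castSucc)) (by simp) ?_ ?_
    · rwa [List.prod_cons] at this
    · rw [List.nodup_cons]
      constructor
      · intro hmem
        obtain ⟨i, _, hi⟩ := List.mem_map.mp hmem
        exact (Fin.castSucc_lt_last i).ne' (hinj hi.symm)
      · exact hm.map fun a b hab => by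
          have := hinj hab
          exact Fin.castSucc_injective k this
    · intro A hA
      rcases List.mem_cons.mp hA with h | h
      · exact ⟨Fin.last k, h.symm⟩
      · obtain ⟨i, _, hi⟩ := List.mem_map.mp h
        exact ⟨i.castSucc, hi⟩
  | cons i l' ih =>
    intro m hm
    have hm' : (l' ++ m).Nodup := (List.nodup_cons.mp hm).2
    have hi : i ∉ l' ++ m := (List.nodup_cons.mp hm).1
    set X := U (Fin.last k) * (m.map (fun i => U i.castSucc)).prod with hX
    set P := (l'.map (fun i => (2⁻¹ : ℂ) • (1 + lam i • U i.castSucc))).prod with hP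
    have expand :
        X * (((i :: l').map (fun i => (2⁻¹ : ℂ) • (1 + lam i • U i.castSucc))).prod)
          = (2⁻¹ : ℂ) • (X * P) + ((2⁻¹ : ℂ) * lam i) • ((X * U i.castSucc) * P) := by
      rw [List.map_cons, List.prod_cons, ← hP]
      simp only [Matrix.mul_smul, Matrix.smul_mul, mul_add, add_mul, mul_one, one_mul,
        smul_add, mul_assoc, mul_smul, Matrix.mul_smul]
    rw [expand, Matrix.trace_add, Matrix.trace_smul, Matrix.trace_smul]
    have h1 : Matrix.trace (X * P) = 0 := ih m hm'
    have h2 : Matrix.trace ((X * U i.castSucc) * P) = 0 := by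
      have hXU : X * U i.castSucc
          = U (Fin.last k) * (((m ++ [i]).map (fun i => U i.castSucc)).prod) := by
        rw [hX, List.map_append, List.prod_append, List.map_singleton, List.prod_singleton,
          mul_assoc]
      rw [hXU]
      apply ih (m ++ [i])
      rw [← List.append_assoc]
      exact (List.perm_append_singleton i (l' ++ m)).nodup_iff.mpr hm
    rw [h1, h2]
    simp

/-- If `U 1, …, U k, U (k+1)` form an independent set of stabilizers, then
for all signs `λ i ∈ {1,-1}`, `tr (U (k+1) * ∏ i (1 + λ i * U i)/2) = 0`. -/
theorem statement0 (N k : ℕ) (hN : 0 < N)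
    (U : Fin (k + 1) → QMat N)
    (hinj : Function.Injective U)
    (hind : IsIndependentSet (Set.range U))
    (lam : Fin k → ℂ) (hlam : ∀ i, lam i = 1 ∨ lam i = -1) :
    Matrix.trace
      (U (Fin.last k) *
        ((List.finRange k).map
          (fun i => (2⁻¹ : ℂ) • (1 + lam i • U i.castSucc))).prod) = 0 := by
  have := main_induction N k U hinj hind lam (List.finRange k) [] (by simpa using List.nodup_finRange k)
  simpa using this
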